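/- arXiv:1704.05953 — 4 statements merged into one kernel-verified Lean document; each statement's English description precedes it below -/
import Mathlib

section
/- Let x ≥ 1, q a positive integer with q ≤ √x, a coprime to q, and β real with |β| ≤ 1/(2q√x). Define F_q(a/q + β) = ∑_{u ≤ √x, q | u} ∑_{u < v ≤ x/u} e(uv(a/q + β)). Then |F_q(a/q + β)| ≪ min(x, 1/|β|) · (log(2√x/q))/q. -/
open Finset Complex

theorem norm_exp_sub_one' (θ : ℝ) : ‖Complex.exp (θ * I) - 1‖ = 2 * |Real.sin (θ/2)| := by
  rw [Complex.exp_mul_I]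
  have h1 : (Complex.cos θ + Complex.sin θ * I - 1) =
      Complex.ofReal (Real.cos θ - 1) + Complex.ofReal (Real.sin θ) * I := by
    push_cast [Complex.ofReal_cos, Complex.ofReal_sin]; ring
  rw [h1, Complex.norm_def, Complex.normSq_add_mul_I]
  have h : (Real.cos θ - 1)^2 + (Real.sin θ)^2 = (2 * |Real.sin (θ/2)|)^2 := by
    have h2 : Real.cos (2*(θ/2)) = 2 * Real.cos (θ/2)^2 - 1 := Real.cos_two_mul _
    have h3 := Real.sin_sq_add_cos_sq (θ/2)
    have h4 := Real.sin_sq_add_cos_sq θ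
    have h5 : |Real.sin (θ/2)|^2 = Real.sin (θ/2)^2 := sq_abs _
    have he : (2:ℝ)*(θ/2) = θ := by ring
    rw [he] at h2
    nlinarith
  rw [h, Real.sqrt_sq (by positivity)]

theorem geom_bound' (z : ℂ) (hz : ‖z‖ = 1) (hz1 : z ≠ 1) (u M : ℕ) :
    ‖∑ v ∈ Finset.Ioc u M, z^v‖ ≤ 2 / ‖z - 1‖ := by
  have h1 : Finset.Ioc u M = Finset.Ico (u+1) (M+1) := by
    ext k; simp [Nat.lt_succ_iff, Nat.succ_le_iff]
  rw [h1, Finset.sum_Ico_eq_sum_range]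
  have h2 : ∑ i ∈ Finset.range (M + 1 - (u + 1)), z ^ (u + 1 + i)
      = z ^ (u+1) * ∑ i ∈ Finset.range (M + 1 - (u + 1)), z ^ i := by
    rw [Finset.mul_sum]; congr 1; ext i; rw [pow_add]
  rw [h2, geom_sum_eq hz1, norm_mul, norm_pow, hz, one_pow, one_mul, norm_div]
  gcongr
  calc ‖z ^ (M + 1 - (u + 1)) - 1‖ ≤ ‖z ^ (M + 1 - (u + 1))‖ + ‖(1:ℂ)‖ := norm_sub_le _ _
    _ = 1 + 1 := by rw [norm_pow, hz, one_pow, norm_one]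
    _ = 2 := by norm_num

lemma term_eq' (q j v : ℕ) (hq : 0 < q) (a : ℤ) (β : ℝ) :
    Complex.exp (2 * Real.pi * Complex.I * (((q * j * v : ℕ) : ℝ) * ((a : ℝ) / q + β))) =
      Complex.exp (2 * Real.pi * Complex.I * (((q * j : ℕ) : ℝ) * β)) ^ v := by
  rw [← Complex.exp_nat_mul]
  have hqC : (q:ℂ) ≠ 0 := Nat.cast_ne_zero.mpr hq.ne'
  have key : (2 * (Real.pi:ℂ) * Complex.I * (((q * j * v : ℕ) : ℝ) * ((a : ℝ) / q + β)))
      = ((j * v * a : ℤ) : ℂ) * (2 * Real.pi * Complex.I)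
        + (v:ℂ) * (2 * Real.pi * Complex.I * (((q * j : ℕ) : ℝ) * β)) := by
    push_cast; field_simp
  rw [key, Complex.exp_add, Complex.exp_int_mul_two_pi_mul_I, one_mul]

set_option maxHeartbeats 1000000 in
/-- Brüdern's estimate for the major-arc piece `F_q`: for `x ≥ 1`, `1 ≤ q ≤ √x`,
`gcd(a,q) = 1` and `|β| ≤ 1/(2q√x)`,
`|F_q(a/q + β)| ≪ min(x, 1/|β|) · log(2√x/q) / q` with an absolute constant
(for `β = 0` the factor `min(x, 1/|β|)` is read as `x`). -/
theorem F_q_estimate :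
    ∃ C > 0, ∀ (x : ℝ) (q : ℕ) (a : ℤ) (β : ℝ), 1 ≤ x → 1 ≤ q →
      (q : ℝ) ≤ Real.sqrt x → Int.gcd a q = 1 → |β| ≤ 1 / (2 * q * Real.sqrt x) →
      ‖∑ u ∈ (Finset.Icc 1 ⌊Real.sqrt x⌋₊).filter (fun u => q ∣ u),
          ∑ v ∈ Finset.Ioc u ⌊x / u⌋₊,
            Complex.exp (2 * Real.pi * Complex.I * ((u * v : ℕ) * ((a : ℝ) / q + β)))‖ ≤
        C * (if β = 0 then x else min x (1 / |β|)) * Real.log (2 * Real.sqrt x / q) / q := by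
  refine ⟨2, by norm_num, ?_⟩
  intro x q a β hx hq hqx ha hβ
  set S := Real.sqrt x with hS
  have hS1 : (1:ℝ) ≤ S := by
    rw [hS, show (1:ℝ) = Real.sqrt 1 by simp]; exact Real.sqrt_le_sqrt hx
  have hqR : (0:ℝ) < q := by exact_mod_cast hq
  set B : ℝ := if β = 0 then x else min x (1 / |β|) with hBdef
  have hB0 : 0 < B := by
    rw [hBdef]; split_ifs with h
    · linarith
    · exact lt_min (by linarith) (by positivity)
  -- per-u bound
  have inner_bound : ∀ u ∈ (Finset.Icc 1 ⌊S⌋₊).filter (fun u => q ∣ u),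
      ‖∑ v ∈ Finset.Ioc u ⌊x / u⌋₊,
          Complex.exp (2 * Real.pi * Complex.I * ((u * v : ℕ) * ((a : ℝ) / q + β)))‖
        ≤ B / u := by
    intro u hu
    simp only [Finset.mem_filter, Finset.mem_Icc] at hu
    obtain ⟨⟨hu1, hu2⟩, j, rfl⟩ := hu
    set u := q * j
    have huR : (1:ℝ) ≤ u := by exact_mod_cast hu1
    have huS : (u:ℝ) ≤ S := le_trans (Nat.cast_le.mpr hu2) (Nat.floor_le (by linarith))
    have hu0 : (0:ℝ) < u := by linarith
    set M := ⌊x / u⌋₊ with hM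
    set z := Complex.exp (2 * Real.pi * Complex.I * ((u : ℝ) * β)) with hz
    have hrw : ∑ v ∈ Finset.Ioc u M,
        Complex.exp (2 * Real.pi * Complex.I * ((u * v : ℕ) * ((a : ℝ) / q + β)))
        = ∑ v ∈ Finset.Ioc u M, z ^ v := by
      refine Finset.sum_congr rfl fun v _ => ?_
      exact term_eq' q j v hq a β
    have hzarg : (2 * (Real.pi:ℂ) * Complex.I * ((u : ℝ) * β))
        = ((2 * Real.pi * (u * β) : ℝ) : ℂ) * Complex.I := by push_cast; ring
    have hznorm : ‖z‖ = 1 := by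
      rw [hz, hzarg, Complex.norm_exp_ofReal_mul_I]
    -- trivial bound
    have hMx : (M:ℝ) ≤ x / u := Nat.floor_le (by positivity)
    have htriv : ‖∑ v ∈ Finset.Ioc u M, z ^ v‖ ≤ x / u := by
      calc ‖∑ v ∈ Finset.Ioc u M, z ^ v‖ ≤ ∑ v ∈ Finset.Ioc u M, ‖z ^ v‖ :=
            norm_sum_le _ _
        _ = ∑ v ∈ Finset.Ioc u M, 1 := by
            refine Finset.sum_congr rfl fun v _ => ?_
            rw [norm_pow, hznorm, one_pow]
        _ = ((M - u : ℕ) : ℝ) := by rw [Finset.sum_const, Nat.card_Ioc]; simp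
        _ ≤ (M : ℝ) := by
            have := Nat.sub_le M u
            exact_mod_cast this
        _ ≤ x / u := hMx
    rw [hrw]
    by_cases hb : β = 0
    · simp only [hBdef, if_pos hb]
      exact htriv
    · -- nontrivial bound
      have hβ0 : 0 < |β| := abs_pos.mpr hb
      have hub : (u:ℝ) * |β| ≤ 1 / (2 * q) := by
        calc (u:ℝ) * |β| ≤ S * (1 / (2 * q * S)) := by
              apply mul_le_mul huS hβ (abs_nonneg _) (by linarith)
          _ = 1 / (2 * q) := by field_simp
      have hub2 : (u:ℝ) * |β| ≤ 1 / 2 := by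
        calc (u:ℝ) * |β| ≤ 1 / (2 * q) := hub
          _ ≤ 1 / 2 := by
              apply div_le_div_of_nonneg_left (by norm_num) (by norm_num) (by nlinarith [show (1:ℝ) ≤ (q:ℝ) from by exact_mod_cast hq])
      have hzsub : ‖z - 1‖ = 2 * |Real.sin (Real.pi * (u * β))| := by
        rw [hz, hzarg, norm_exp_sub_one']
        congr 2
        ring
      have hsin : 2 / Real.pi * |Real.pi * (u * β)| ≤ |Real.sin (Real.pi * (u * β))| := by
        have hple : |Real.pi * (u * β)| ≤ Real.pi / 2 := by
          rw [abs_mul, abs_of_pos Real.pi_pos, abs_mul, abs_of_pos hu0]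
          calc Real.pi * ((u:ℝ) * |β|) ≤ Real.pi * (1/2) := by
                apply mul_le_mul_of_nonneg_left hub2 Real.pi_pos.le
            _ = Real.pi / 2 := by ring
        have := Real.mul_le_sin (abs_nonneg (Real.pi * (u * β))) hple
        calc 2 / Real.pi * |Real.pi * (u * β)| ≤ Real.sin |Real.pi * (u * β)| := this
          _ ≤ |Real.sin (Real.pi * (u * β))| := by
              rcases abs_choice (Real.pi * (u * β)) with h | h
              · rw [h]; exact le_abs_self _
              · rw [h, Real.sin_neg]; exact neg_le_abs _
      have hlow : 4 * ((u:ℝ) * |β|) ≤ ‖z - 1‖ := by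
        rw [hzsub]
        have : 2 / Real.pi * |Real.pi * (u * β)| = 2 * ((u:ℝ) * |β|) := by
          rw [abs_mul, abs_of_pos Real.pi_pos, abs_mul, abs_of_pos hu0]
          field_simp
        nlinarith [hsin, this]
      have hzne : z ≠ 1 := by
        intro h
        rw [h, sub_self, norm_zero] at hlow
        nlinarith
      have hgeom := geom_bound' z hznorm hzne u M
      have hbnd : ‖∑ v ∈ Finset.Ioc u M, z ^ v‖ ≤ 1 / ((u:ℝ) * |β|) := by
        calc ‖∑ v ∈ Finset.Ioc u M, z ^ v‖ ≤ 2 / ‖z - 1‖ := hgeom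
          _ ≤ 2 / (4 * ((u:ℝ) * |β|)) := by
              apply div_le_div_of_nonneg_left (by norm_num) (by positivity) hlow
          _ ≤ 1 / ((u:ℝ) * |β|) := by
              rw [div_le_div_iff₀ (by positivity) (by positivity)]
              nlinarith
      simp only [hBdef, if_neg hb]
      rw [← min_div_div_right hu0.le]
      refine le_min htriv ?_
      calc ‖∑ v ∈ Finset.Ioc u M, z ^ v‖ ≤ 1 / ((u:ℝ) * |β|) := hbnd
        _ = 1 / |β| / u := by rw [div_div]; ring_nf
  -- outer sum
  set N := ⌊S⌋₊ with hN
  set J := N / q with hJ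
  clear_value N
  clear_value J
  have hfilter : (Finset.Icc 1 N).filter (fun u => q ∣ u)
      = (Finset.Icc 1 J).image (fun j => q * j) := by
    ext u
    simp only [Finset.mem_filter, Finset.mem_Icc, Finset.mem_image]
    constructor
    · rintro ⟨⟨h1, h2⟩, k, rfl⟩
      refine ⟨k, ⟨?_, ?_⟩, rfl⟩
      · rcases Nat.eq_zero_or_pos k with rfl | hk
        · simp at h1
        · exact hk
      · rw [hJ]
        exact Nat.le_div_iff_mul_le hq |>.mpr (by rwa [Nat.mul_comm] at h2)
    · rintro ⟨k, ⟨hk1, hk2⟩, rfl⟩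
      refine ⟨⟨Nat.one_le_iff_ne_zero.mpr (by positivity), ?_⟩, k, rfl⟩
      rw [hJ] at hk2
      have := (Nat.le_div_iff_mul_le hq).mp hk2
      rwa [Nat.mul_comm] at this
  have hnorm : ‖∑ u ∈ (Finset.Icc 1 N).filter (fun u => q ∣ u),
      ∑ v ∈ Finset.Ioc u ⌊x / u⌋₊,
        Complex.exp (2 * Real.pi * Complex.I * ((u * v : ℕ) * ((a : ℝ) / q + β)))‖
      ≤ ∑ j ∈ Finset.Icc 1 J, B / (q * j) := by
    calc ‖∑ u ∈ (Finset.Icc 1 N).filter (fun u => q ∣ u), ∑ v ∈ Finset.Ioc u ⌊x / u⌋₊,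
          Complex.exp (2 * Real.pi * Complex.I * ((u * v : ℕ) * ((a : ℝ) / q + β)))‖
        ≤ ∑ u ∈ (Finset.Icc 1 N).filter (fun u => q ∣ u), B / u :=
          (norm_sum_le _ _).trans (Finset.sum_le_sum inner_bound)
      _ = ∑ j ∈ Finset.Icc 1 J, B / (q * j) := by
          rw [hfilter, Finset.sum_image]
          · push_cast; rfl
          · intro i _ j _ h
            exact Nat.eq_of_mul_eq_mul_left hq h
  have hharm : ∑ j ∈ Finset.Icc 1 J, B / ((q:ℝ) * j) ≤ B / q * (1 + Real.log J) := by
    have h1 : ∑ j ∈ Finset.Icc 1 J, B / ((q:ℝ) * j)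
        = B / q * ∑ j ∈ Finset.Icc 1 J, ((j:ℝ))⁻¹ := by
      rw [Finset.mul_sum]
      refine Finset.sum_congr rfl fun j hj => ?_
      have hj1 : 1 ≤ j := (Finset.mem_Icc.mp hj).1
      have hjR : ((j:ℝ)) ≠ 0 := Nat.cast_ne_zero.mpr (by omega)
      field_simp
    have h2 : ∑ j ∈ Finset.Icc 1 J, ((j:ℝ))⁻¹ = ((harmonic J : ℚ) : ℝ) := by
      rw [harmonic_eq_sum_Icc]
      push_cast
      rfl
    rw [h1, h2]
    have h3 := harmonic_le_one_add_log J
    have hBq : 0 ≤ B / (q:ℝ) := by positivity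
    exact mul_le_mul_of_nonneg_left h3 hBq
  -- log comparison
  have hJS : (J:ℝ) ≤ S / q := by
    have h1 : J * q ≤ N := by rw [hJ]; exact Nat.div_mul_le_self N q
    have h2 : (N:ℝ) ≤ S := by rw [hN]; exact Nat.floor_le (by linarith)
    have h3 : ((J * q : ℕ):ℝ) ≤ S := le_trans (Nat.cast_le.mpr h1) h2
    rw [le_div_iff₀ hqR]
    push_cast at h3 ⊢
    linarith
  have ht1 : (1:ℝ) ≤ S / q := (one_le_div hqR).mpr hqx
  have hlog2 : (0.6931471803 : ℝ) < Real.log 2 := Real.log_two_gt_d9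
  have hlogt : 0 ≤ Real.log (S / q) := Real.log_nonneg ht1
  have hlogJ : Real.log J ≤ Real.log (S / q) := by
    rcases Nat.eq_zero_or_pos J with hJ0 | hJ0
    · rw [hJ0, Nat.cast_zero, Real.log_zero]; exact hlogt
    · exact Real.log_le_log (by exact_mod_cast hJ0) hJS
  have hsplit : Real.log (2 * S / q) = Real.log 2 + Real.log (S / q) := by
    rw [show (2 : ℝ) * S / q = 2 * (S / q) by ring, Real.log_mul two_ne_zero (by linarith)]
  have hkey : 1 + Real.log J ≤ 2 * Real.log (2 * S / q) := by
    rw [hsplit]; linarith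
  calc ‖∑ u ∈ (Finset.Icc 1 N).filter (fun u => q ∣ u),
        ∑ v ∈ Finset.Ioc u ⌊x / u⌋₊,
          Complex.exp (2 * Real.pi * Complex.I * ((u * v : ℕ) * ((a : ℝ) / q + β)))‖
      ≤ ∑ j ∈ Finset.Icc 1 J, B / (q * j) := hnorm
    _ ≤ B / q * (1 + Real.log J) := hharm
    _ ≤ B / q * (2 * Real.log (2 * S / q)) :=
        mul_le_mul_of_nonneg_left hkey (by positivity)
    _ = 2 * B * Real.log (2 * S / q) / q := by ring
end

section
/- Let x ≥ 1, q a positive integer, a coprime to q, and β real with |β| ≤ 1/(2q√x). Define G_q(a/q + β) = ∑_{u ≤ √x, q ∤ u} ∑_{u < v ≤ x/u} e(uv(a/q + β)). Then |G_q(a/q + β)| ≪ (√x + q) log q, with an absolute implied constant. -/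
open Finset

noncomputable def Dni (t : ℝ) : ℝ := |t - round t|

lemma Dni_nonneg (t : ℝ) : 0 ≤ Dni t := abs_nonneg _

lemma Dni_le (t : ℝ) (m : ℤ) : Dni t ≤ |t - m| := round_le t m

lemma Dni_add_int (t : ℝ) (m : ℤ) : Dni (t + m) = Dni t := by
  unfold Dni; rw [round_add_intCast]; push_cast; ring_nf

lemma Dni_sub_abs_le (t ε : ℝ) : Dni t - |ε| ≤ Dni (t + ε) := by
  have h1 : Dni t ≤ |t - round (t + ε)| := Dni_le t _
  have h2 : |t - round (t + ε)| ≤ Dni (t + ε) + |ε| := by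
    have : t - round (t + ε) = (t + ε - round (t + ε)) + (-ε) := by ring
    rw [this]
    calc |(t + ε - round (t + ε)) + (-ε)| ≤ |t + ε - round (t + ε)| + |(-ε)| := abs_add_le _ _
      _ = Dni (t + ε) + |ε| := by rw [abs_neg]; rfl
  linarith

lemma Dni_int_div {q : ℕ} (hq : 0 < q) {m : ℤ} (h : ¬ (q : ℤ) ∣ m) :
    1 / q ≤ Dni ((m : ℝ) / q) := by
  have hq' : (0:ℝ) < q := by exact_mod_cast hq
  set r := round ((m : ℝ) / q)
  have hne : m - r * q ≠ 0 := by
    intro hc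
    exact h ⟨r, by linarith [sub_eq_zero.mp hc]⟩
  have h1 : (1:ℝ) ≤ |((m - r * q : ℤ) : ℝ)| := by
    rw [← Int.cast_abs]
    exact_mod_cast Int.one_le_abs (by exact_mod_cast hne)
  have : Dni ((m : ℝ) / q) = |((m - r * q : ℤ) : ℝ)| / q := by
    unfold Dni
    rw [← abs_of_pos hq', ← abs_div]
    congr 1
    push_cast
    rw [abs_of_pos hq']
    field_simp
    ring
  rw [this]
  gcongr

lemma Dni_ge_min {t : ℝ} (h0 : 0 < t) (h1 : t < 1) : min t (1 - t) ≤ Dni t := by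
  rcases le_or_gt (round t) 0 with h | h
  · have : (round t : ℝ) ≤ 0 := by exact_mod_cast h
    calc min t (1 - t) ≤ t := min_le_left _ _
      _ ≤ |t - round t| := by rw [abs_sub_comm]; rw [abs_of_nonpos (by linarith)]; linarith
  · have : (1:ℝ) ≤ (round t : ℝ) := by exact_mod_cast h
    calc min t (1 - t) ≤ 1 - t := min_le_right _ _
      _ ≤ |t - round t| := by rw [abs_of_nonpos (by linarith)]; linarith

lemma norm_exp_theta_sub_one (θ : ℝ) :
    ‖Complex.exp (θ * Complex.I) - 1‖ = 2 * |Real.sin (θ / 2)| := by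
  have h : Complex.exp (θ * Complex.I) - 1 =
      Complex.ofReal (Real.cos θ - 1) + Complex.ofReal (Real.sin θ) * Complex.I := by
    rw [show ((θ : ℂ) * Complex.I) = (θ : ℂ) * Complex.I from rfl, Complex.exp_mul_I]
    push_cast [Complex.ofReal_cos, Complex.ofReal_sin]
    ring
  rw [h, Complex.norm_add_mul_I]
  have h2 : (Real.cos θ - 1) ^ 2 + Real.sin θ ^ 2 = (2 * |Real.sin (θ / 2)|) ^ 2 := by
    have hs := Real.sin_sq_add_cos_sq θ
    have hh := Real.sin_sq_eq_half_sub (θ / 2)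
    rw [show 2 * (θ / 2) = θ by ring] at hh
    have : (2 * |Real.sin (θ / 2)|) ^ 2 = 4 * Real.sin (θ / 2) ^ 2 := by
      rw [mul_pow, sq_abs]; ring
    rw [this, hh]; nlinarith [hs]
  rw [h2, Real.sqrt_sq (by positivity)]

lemma jordan_bound (t : ℝ) :
    4 * Dni t ≤ ‖Complex.exp (2 * Real.pi * Complex.I * t) - 1‖ := by
  have harg : (2 * Real.pi * Complex.I * t) = ((2 * Real.pi * t : ℝ) : ℂ) * Complex.I := by
    push_cast; ring
  rw [harg, norm_exp_theta_sub_one, show (2 * Real.pi * t) / 2 = Real.pi * t by ring]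
  set d := t - round t with hd
  have hsin : |Real.sin (Real.pi * t)| = |Real.sin (Real.pi * d)| := by
    have : Real.pi * t = Real.pi * d + (round t : ℝ) * Real.pi := by rw [hd]; ring
    rw [this, Real.sin_add_int_mul_pi, abs_mul, show |((-1:ℝ))^ round t| = 1 from by rcases Int.even_or_odd (round t) with h | h <;> simp [h.neg_one_zpow], one_mul]
  rw [hsin]
  have hhalf : |d| ≤ 1 / 2 := abs_sub_round t
  have key : 2 * |d| ≤ |Real.sin (Real.pi * d)| := by
    have h1 : |Real.sin (Real.pi * d)| = Real.sin (Real.pi * |d|) := by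
      rcases abs_cases d with ⟨h, _⟩ | ⟨h, _⟩
      · rw [h, abs_of_nonneg]
        apply Real.sin_nonneg_of_nonneg_of_le_pi
        · positivity
        · nlinarith [Real.pi_pos, h ▸ hhalf]
      · rw [h, show Real.pi * -d = -(Real.pi * d) by ring, Real.sin_neg]
        rw [abs_of_nonpos]
        apply Real.sin_nonpos_of_nonpos_of_neg_pi_le
        · nlinarith [Real.pi_pos, abs_nonneg d, h ▸ hhalf]
        · nlinarith [Real.pi_pos, h ▸ hhalf]
    rw [h1]
    have := Real.mul_le_sin (x := Real.pi * |d|) (by positivity)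
      (by nlinarith [Real.pi_pos])
    calc 2 * |d| = 2 / Real.pi * (Real.pi * |d|) := by
          field_simp
      _ ≤ Real.sin (Real.pi * |d|) := this
  unfold Dni
  rw [← hd]
  linarith

lemma geom_Ioc_bound {z : ℂ} (hz : ‖z‖ = 1) (hz1 : z ≠ 1) (u M : ℕ) :
    ‖∑ v ∈ Finset.Ioc u M, z ^ v‖ ≤ 2 / ‖z - 1‖ := by
  have hpos : 0 < ‖z - 1‖ := by
    rw [norm_pos_iff]; exact sub_ne_zero.mpr hz1
  rcases le_or_gt M u with h | h
  · rw [Finset.Ioc_eq_empty (by omega), Finset.sum_empty, norm_zero]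
    positivity
  · rw [← Finset.Ico_add_one_add_one_eq_Ioc, geom_sum_Ico hz1 (by omega)]
    rw [norm_div]
    calc ‖z ^ (M + 1) - z ^ (u + 1)‖ / ‖z - 1‖
        ≤ (‖z ^ (M + 1)‖ + ‖z ^ (u + 1)‖) / ‖z - 1‖ := by
          gcongr; exact norm_sub_le _ _
      _ = 2 / ‖z - 1‖ := by rw [norm_pow, norm_pow, hz]; norm_num

lemma sum_range_zmod {q : ℕ} [NeZero q] (hq : 0 < q) (h : ZMod q → ℝ) :
    ∑ i ∈ Finset.range q, h (i : ZMod q) = ∑ s : ZMod q, h s := by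
  exact Finset.sum_nbij' (fun i => (i : ZMod q)) (fun s => s.val)
    (fun a _ => Finset.mem_univ _) (fun s _ => Finset.mem_range.mpr (ZMod.val_lt s))
    (fun a ha => ZMod.val_cast_of_lt (Finset.mem_range.mp ha))
    (fun s _ => ZMod.natCast_rightInverse s) (fun a _ => rfl)

lemma sum_range_mul_zmod {q : ℕ} [NeZero q] (hq : 0 < q) (h : ZMod q → ℝ) (K : ℕ) :
    ∑ u ∈ Finset.range (K * q), h (u : ZMod q) = K * ∑ s : ZMod q, h s := by
  induction K with
  | zero => simp
  | succ K ih =>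
    have hsplit : ∑ u ∈ Finset.range ((K + 1) * q), h (u : ZMod q)
        = ∑ u ∈ Finset.range (K * q), h (u : ZMod q)
          + ∑ u ∈ Finset.Ico (K * q) ((K + 1) * q), h (u : ZMod q) := by
      simp only [Finset.range_eq_Ico]
      rw [Finset.sum_Ico_consecutive _ (Nat.zero_le _) (by nlinarith)]
    have hlast : ∑ u ∈ Finset.Ico (K * q) ((K + 1) * q), h (u : ZMod q)
        = ∑ s : ZMod q, h s := by
      rw [Finset.sum_Ico_eq_sum_range]
      have h1 : ∀ i, ((K * q + i : ℕ) : ZMod q) = (i : ZMod q) := by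
        intro i; push_cast [ZMod.natCast_self]; ring
      calc ∑ i ∈ Finset.range ((K + 1) * q - K * q), h ((K * q + i : ℕ) : ZMod q)
          = ∑ i ∈ Finset.range q, h ((i : ℕ) : ZMod q) := by
            rw [show (K + 1) * q - K * q = q by ring_nf; omega]
            exact Finset.sum_congr rfl (fun i _ => by rw [h1])
        _ = ∑ s : ZMod q, h s := sum_range_zmod hq h
    rw [hsplit, ih, hlast]; push_cast; ring

lemma count_bound {q : ℕ} [NeZero q] (hq : 0 < q) (h : ZMod q → ℝ) (hpos : ∀ s, 0 ≤ h s) (U : ℕ) :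
    ∑ u ∈ Finset.Icc 1 U, h (u : ZMod q) ≤ (U / q + 1 : ℕ) * ∑ s : ZMod q, h s := by
  have hsub : Finset.Icc 1 U ⊆ Finset.range ((U / q + 1) * q) := by
    intro u hu
    rw [Finset.mem_range]
    have h1 := Nat.div_add_mod U q
    have h2 := Nat.mod_lt U hq
    have h3 := Finset.mem_Icc.mp hu
    nlinarith
  calc ∑ u ∈ Finset.Icc 1 U, h (u : ZMod q)
      ≤ ∑ u ∈ Finset.range ((U / q + 1) * q), h (u : ZMod q) :=
        Finset.sum_le_sum_of_subset_of_nonneg hsub (fun i _ _ => hpos _)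
    _ = (U / q + 1 : ℕ) * ∑ s : ZMod q, h s := by
        rw [sum_range_mul_zmod hq]

lemma g_sum_bound (q : ℕ) [NeZero q] (hq : 0 < q) :
    ∑ s : ZMod q, (if s = 0 then (0:ℝ) else (Dni ((s.val : ℝ) / q))⁻¹)
      ≤ 2 * q * (1 + Real.log q) := by
  have hq' : (0:ℝ) < q := by exact_mod_cast hq
  rw [← sum_range_zmod hq]
  have hstep : ∀ i ∈ Finset.range q,
      (if (i : ZMod q) = 0 then (0:ℝ) else (Dni ((((i : ZMod q)).val : ℝ) / q))⁻¹)
        = (if i = 0 then (0:ℝ) else (Dni ((i : ℝ) / q))⁻¹) := by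
    intro i hi
    have hiq := Finset.mem_range.mp hi
    rcases eq_or_ne i 0 with rfl | hne
    · simp
    · have hz : (i : ZMod q) ≠ 0 := by
        rw [Ne, ZMod.natCast_eq_zero_iff]
        intro hdvd
        exact hne (Nat.eq_zero_of_dvd_of_lt hdvd hiq)
      rw [if_neg hz, if_neg hne, ZMod.val_cast_of_lt hiq]
  rw [Finset.sum_congr rfl hstep]
  have hterm : ∀ i ∈ Finset.range q, (if i = 0 then (0:ℝ) else (Dni ((i : ℝ) / q))⁻¹)
      ≤ (if i = 0 then (0:ℝ) else (q : ℝ) / i + (q : ℝ) / (q - i)) := by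
    intro i hi
    have hiq := Finset.mem_range.mp hi
    rcases eq_or_ne i 0 with rfl | hne
    · simp
    · rw [if_neg hne, if_neg hne]
      have hi1 : 1 ≤ i := Nat.one_le_iff_ne_zero.mpr hne
      have h1 : (1:ℝ) ≤ (i:ℝ) := by exact_mod_cast hi1
      have h2 : (i:ℝ) ≤ (q:ℝ) - 1 := by
        have : i + 1 ≤ q := hiq
        have := (Nat.cast_le (α := ℝ)).mpr this
        push_cast at this; linarith
      have ht0 : 0 < (i:ℝ)/q := by positivity
      have ht1 : (i:ℝ)/q < 1 := by rw [div_lt_one hq']; linarith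
      have hmin := Dni_ge_min ht0 ht1
      have hminpos : 0 < min ((i:ℝ)/q) (1 - (i:ℝ)/q) := by
        apply lt_min ht0; linarith
      have hDpos : 0 < Dni ((i:ℝ)/q) := lt_of_lt_of_le hminpos hmin
      have hinv : (Dni ((i:ℝ)/q))⁻¹ ≤ (min ((i:ℝ)/q) (1 - (i:ℝ)/q))⁻¹ :=
        inv_anti₀ hminpos hmin
      refine hinv.trans ?_
      have e1 : ((i:ℝ)/q)⁻¹ = (q:ℝ)/i := by field_simp
      have e2 : (1 - (i:ℝ)/q)⁻¹ = (q:ℝ)/(q - i) := by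
        rw [show 1 - (i:ℝ)/q = (q - i)/q by field_simp, inv_div]
      rcases min_cases ((i:ℝ)/q) (1 - (i:ℝ)/q) with ⟨hm, _⟩ | ⟨hm, _⟩
      · rw [hm, e1]
        have : 0 ≤ (q:ℝ)/(q - i) := by
          apply div_nonneg hq'.le; linarith
        linarith
      · rw [hm, e2]
        have : 0 ≤ (q:ℝ)/i := by positivity
        linarith
  refine (Finset.sum_le_sum hterm).trans ?_
  have hsplit : ∑ i ∈ Finset.range q, (if i = 0 then (0:ℝ) else (q : ℝ) / i + (q : ℝ) / (q - i))
      = ∑ i ∈ Finset.Ico 1 q, ((q : ℝ) / i + (q : ℝ) / (q - i)) := by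
    rw [Finset.range_eq_Ico, ← Finset.sum_Ico_consecutive _ (Nat.zero_le 1) hq]
    rw [show Finset.Ico 0 1 = {0} from rfl, Finset.sum_singleton, if_pos rfl, zero_add]
    exact Finset.sum_congr rfl (fun i hi => by
      rw [if_neg (by have := (Finset.mem_Ico.mp hi).1; omega)])
  rw [hsplit]
  have hreflect : ∑ i ∈ Finset.Ico 1 q, (q : ℝ) / (q - i)
      = ∑ i ∈ Finset.Ico 1 q, (q : ℝ) / i := by
    apply Finset.sum_nbij' (fun i => q - i) (fun i => q - i)
    · intro i hi; rw [Finset.mem_Ico] at *; omega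
    · intro i hi; rw [Finset.mem_Ico] at *; omega
    · intro i hi; rw [Finset.mem_Ico] at hi; omega
    · intro i hi; rw [Finset.mem_Ico] at hi; omega
    · intro i hi
      rw [Finset.mem_Ico] at hi
      congr 1
      rw [Nat.cast_sub (by omega)]
  have hsum2 : ∑ i ∈ Finset.Ico 1 q, ((q : ℝ) / i + (q : ℝ) / (q - i))
      = 2 * q * ∑ i ∈ Finset.Ico 1 q, (1 : ℝ) / i := by
    rw [Finset.sum_add_distrib, hreflect, Finset.mul_sum]
    rw [← Finset.sum_add_distrib]
    exact Finset.sum_congr rfl (fun i _ => by field_simp; ring)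
  rw [hsum2]
  have hharm : ∑ i ∈ Finset.Ico 1 q, (1 : ℝ) / i ≤ 1 + Real.log q := by
    have hIco : Finset.Ico 1 q = Finset.Icc 1 (q - 1) := by
      rw [← Finset.Ico_add_one_right_eq_Icc]; congr 1; omega
    rw [hIco]
    have : ∑ i ∈ Finset.Icc 1 (q - 1), (1 : ℝ) / i = ((harmonic (q - 1) : ℚ) : ℝ) := by
      rw [harmonic_eq_sum_Icc]; push_cast; simp [one_div]
    rw [this]
    refine (harmonic_le_one_add_log (q - 1)).trans ?_
    have hlog : Real.log (q - 1 : ℕ) ≤ Real.log q := by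
      rcases Nat.eq_zero_or_pos (q - 1) with h0 | hpos
      · rw [h0, Nat.cast_zero, Real.log_zero]
        exact Real.log_nonneg (by exact_mod_cast hq)
      · apply Real.log_le_log (by exact_mod_cast hpos)
        exact_mod_cast Nat.sub_le q 1
    linarith
  calc 2 * (q : ℝ) * ∑ i ∈ Finset.Ico 1 q, (1 : ℝ) / i
      ≤ 2 * q * (1 + Real.log q) := by
        apply mul_le_mul_of_nonneg_left hharm (by positivity)

/-- Estimate for the minor piece `G_q`: for `x ≥ 1`, `q ≥ 1`, `gcd(a,q) = 1` and
`|β| ≤ 1/(2q√x)`, `|G_q(a/q + β)| ≪ (√x + q) log q` with an absolute constant. -/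
theorem G_q_estimate :
    ∃ C > 0, ∀ (x : ℝ) (q : ℕ) (a : ℤ) (β : ℝ), 1 ≤ x → 1 ≤ q →
      Int.gcd a q = 1 → |β| ≤ 1 / (2 * q * Real.sqrt x) →
      ‖∑ u ∈ (Finset.Icc 1 ⌊Real.sqrt x⌋₊).filter (fun u => ¬ q ∣ u),
          ∑ v ∈ Finset.Ioc u ⌊x / u⌋₊,
            Complex.exp (2 * Real.pi * Complex.I * ((u * v : ℕ) * ((a : ℝ) / q + β)))‖ ≤
        C * (Real.sqrt x + q) * Real.log q := by
  refine ⟨6, by norm_num, ?_⟩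
  intro x q a β hx hq hgcd hβ
  haveI : NeZero q := ⟨by omega⟩
  set U := ⌊Real.sqrt x⌋₊ with hU
  rcases eq_or_lt_of_le hq with hq1 | hq2
  · -- q = 1
    have hfilter : (Finset.Icc 1 U).filter (fun u => ¬ q ∣ u) = ∅ := by
      apply Finset.filter_false_of_mem
      intro u _
      rw [not_not, ← hq1]
      exact one_dvd u
    rw [hfilter, Finset.sum_empty, norm_zero, ← hq1]
    norm_num
  -- now 2 ≤ q
  have hq2' : 2 ≤ q := hq2
  have hqR : (0:ℝ) < q := by positivity
  have hsx1 : (1:ℝ) ≤ Real.sqrt x := by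
    rw [show (1:ℝ) = Real.sqrt 1 by simp]
    exact Real.sqrt_le_sqrt hx
  have hsx0 : (0:ℝ) < Real.sqrt x := by linarith
  set θ := (a : ℝ) / q + β with hθ
  set g : ZMod q → ℝ := fun s => if s = 0 then (0:ℝ) else (Dni ((s.val : ℝ) / q))⁻¹ with hg
  have hgnn : ∀ s, 0 ≤ g s := by
    intro s; rw [hg]; dsimp only
    split
    · exact le_refl 0
    · exact inv_nonneg.mpr (Dni_nonneg _)
  have hco : IsCoprime a (q : ℤ) := Int.isCoprime_iff_gcd_eq_one.mpr hgcd
  have hmain : ∀ u ∈ (Finset.Icc 1 U).filter (fun u => ¬ q ∣ u),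
      ‖∑ v ∈ Finset.Ioc u ⌊x / u⌋₊,
          Complex.exp (2 * Real.pi * Complex.I * ((u * v : ℕ) * ((a : ℝ) / q + β)))‖
        ≤ g ((a : ZMod q) * (u : ZMod q)) := by
    intro u hu
    obtain ⟨huIcc, hndvd⟩ := Finset.mem_filter.mp hu
    obtain ⟨hu1, huU⟩ := Finset.mem_Icc.mp huIcc
    have hndvdZ : ¬ (q : ℤ) ∣ a * u := by
      intro hdvd
      exact hndvd (Int.natCast_dvd_natCast.mp (hco.symm.dvd_of_dvd_mul_left hdvd))
    -- bound on |u β|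
    have huR : (1:ℝ) ≤ (u:ℝ) := by exact_mod_cast hu1
    have hule : (u:ℝ) ≤ Real.sqrt x := by
      calc (u:ℝ) ≤ (U:ℝ) := by exact_mod_cast huU
        _ ≤ Real.sqrt x := Nat.floor_le hsx0.le
    have hub : |(u:ℝ) * β| ≤ 1 / (2 * q) := by
      rw [abs_mul, abs_of_nonneg (by linarith : (0:ℝ) ≤ (u:ℝ))]
      calc (u:ℝ) * |β| ≤ Real.sqrt x * (1 / (2 * q * Real.sqrt x)) := by
            apply mul_le_mul hule hβ (abs_nonneg _) hsx0.le
        _ = 1 / (2 * q) := by field_simp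
    -- Dni lower bounds
    have hDa : 1 / (q:ℝ) ≤ Dni (((a * u : ℤ) : ℝ) / q) := Dni_int_div (by omega) hndvdZ
    have hDapos : 0 < Dni (((a * u : ℤ) : ℝ) / q) := lt_of_lt_of_le (by positivity) hDa
    have hsplitθ : (u:ℝ) * θ = ((a * u : ℤ) : ℝ) / q + (u:ℝ) * β := by
      rw [hθ]; push_cast; field_simp
    have hDθ : Dni (((a * u : ℤ) : ℝ) / q) / 2 ≤ Dni ((u:ℝ) * θ) := by
      rw [hsplitθ]
      have h1 := Dni_sub_abs_le (((a * u : ℤ) : ℝ) / q) ((u:ℝ) * β)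
      have h2 : 1 / (2 * (q:ℝ)) ≤ Dni (((a * u : ℤ) : ℝ) / q) / 2 := by
        rw [show 1 / (2 * (q:ℝ)) = (1 / q) / 2 by ring]
        linarith
      linarith
    have hDθpos : 0 < Dni ((u:ℝ) * θ) := lt_of_lt_of_le (by positivity) hDθ
    -- the complex number z
    set z := Complex.exp (2 * Real.pi * Complex.I * (((u:ℝ) * θ : ℝ) : ℂ)) with hz
    have hzv : ∀ v : ℕ,
        Complex.exp (2 * Real.pi * Complex.I * ((u * v : ℕ) * ((a : ℝ) / q + β))) = z ^ v := by
      intro v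
      rw [hz, ← Complex.exp_nat_mul]
      congr 1
      rw [hθ]
      push_cast
      ring
    have hznorm : ‖z‖ = 1 := by
      rw [hz, show (2 * (Real.pi:ℂ) * Complex.I * (((u:ℝ) * θ : ℝ) : ℂ))
          = ((2 * Real.pi * ((u:ℝ) * θ) : ℝ) : ℂ) * Complex.I by push_cast; ring]
      exact Complex.norm_exp_ofReal_mul_I _
    have hjordan := jordan_bound ((u:ℝ) * θ)
    have hzne : z ≠ 1 := by
      intro h1
      rw [hz] at h1
      rw [h1] at hjordan
      simp only [sub_self, norm_zero] at hjordan
      linarith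
    -- the residue
    set s : ZMod q := (a : ZMod q) * (u : ZMod q) with hs
    have hsne : s ≠ 0 := by
      intro h0
      apply hndvdZ
      rw [← ZMod.intCast_zmod_eq_zero_iff_dvd]
      push_cast
      rw [← hs]
      exact_mod_cast h0
    have hDs : Dni (((a * u : ℤ) : ℝ) / q) = Dni ((s.val : ℝ) / q) := by
      have hcast : ((a * u - (s.val : ℤ) : ℤ) : ZMod q) = 0 := by
        push_cast [ZMod.natCast_val, ZMod.cast_id]
        rw [← hs]
        ring
      obtain ⟨k, hk⟩ := (ZMod.intCast_zmod_eq_zero_iff_dvd _ _).mp hcast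
      have : ((a * u : ℤ) : ℝ) / q = (s.val : ℝ) / q + (k : ℝ) := by
        have hk' : (a * (u : ℤ) : ℤ) = (s.val : ℤ) + q * k := by linarith [hk]
        rw [hk']
        push_cast
        field_simp
      rw [this, Dni_add_int]
    calc ‖∑ v ∈ Finset.Ioc u ⌊x / u⌋₊,
            Complex.exp (2 * Real.pi * Complex.I * ((u * v : ℕ) * ((a : ℝ) / q + β)))‖
        = ‖∑ v ∈ Finset.Ioc u ⌊x / u⌋₊, z ^ v‖ := by
          congr 1
          exact Finset.sum_congr rfl (fun v _ => hzv v)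
      _ ≤ 2 / ‖z - 1‖ := geom_Ioc_bound hznorm hzne _ _
      _ ≤ 2 / (4 * Dni ((u:ℝ) * θ)) := by
          apply div_le_div_of_nonneg_left (by norm_num) (by positivity) hjordan
      _ ≤ 2 / (4 * (Dni (((a * u : ℤ) : ℝ) / q) / 2)) := by
          apply div_le_div_of_nonneg_left (by norm_num) (by positivity)
          apply mul_le_mul_of_nonneg_left hDθ (by norm_num)
      _ = (Dni (((a * u : ℤ) : ℝ) / q))⁻¹ := by
          have hD0 : Dni (((a * u : ℤ) : ℝ) / q) ≠ 0 := ne_of_gt hDapos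
          field_simp
          ring
      _ = g s := by
          rw [hg]; dsimp only
          rw [if_neg hsne, hDs]
  -- sum the bounds
  have h1 : ‖∑ u ∈ (Finset.Icc 1 U).filter (fun u => ¬ q ∣ u),
      ∑ v ∈ Finset.Ioc u ⌊x / u⌋₊,
        Complex.exp (2 * Real.pi * Complex.I * ((u * v : ℕ) * ((a : ℝ) / q + β)))‖
      ≤ ∑ u ∈ Finset.Icc 1 U, g ((a : ZMod q) * (u : ZMod q)) := by
    calc ‖∑ u ∈ (Finset.Icc 1 U).filter (fun u => ¬ q ∣ u),
        ∑ v ∈ Finset.Ioc u ⌊x / u⌋₊,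
          Complex.exp (2 * Real.pi * Complex.I * ((u * v : ℕ) * ((a : ℝ) / q + β)))‖
        ≤ ∑ u ∈ (Finset.Icc 1 U).filter (fun u => ¬ q ∣ u),
            ‖∑ v ∈ Finset.Ioc u ⌊x / u⌋₊,
              Complex.exp (2 * Real.pi * Complex.I * ((u * v : ℕ) * ((a : ℝ) / q + β)))‖ :=
          norm_sum_le _ _
      _ ≤ ∑ u ∈ (Finset.Icc 1 U).filter (fun u => ¬ q ∣ u),
            g ((a : ZMod q) * (u : ZMod q)) := Finset.sum_le_sum hmain
      _ ≤ ∑ u ∈ Finset.Icc 1 U, g ((a : ZMod q) * (u : ZMod q)) :=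
          Finset.sum_le_sum_of_subset_of_nonneg (Finset.filter_subset _ _)
            (fun i _ _ => hgnn _)
  have h2 : ∑ u ∈ Finset.Icc 1 U, g ((a : ZMod q) * (u : ZMod q))
      ≤ (U / q + 1 : ℕ) * ∑ s : ZMod q, g ((a : ZMod q) * s) :=
    count_bound (by omega) (fun s => g ((a : ZMod q) * s)) (fun s => hgnn _) U
  have h3 : ∑ s : ZMod q, g ((a : ZMod q) * s) = ∑ s : ZMod q, g s := by
    obtain ⟨m, n, hmn⟩ := hco
    have hab : (m : ZMod q) * (a : ZMod q) = 1 := by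
      have := congrArg (fun z : ℤ => (z : ZMod q)) hmn
      push_cast at this
      rwa [ZMod.natCast_self, mul_zero, add_zero] at this
    have hbij : Function.Bijective (fun s : ZMod q => (a : ZMod q) * s) := by
      rw [Function.bijective_iff_has_inverse]
      refine ⟨fun s => (m : ZMod q) * s, fun s => ?_, fun s => ?_⟩
      · dsimp only
        linear_combination s * hab
      · dsimp only
        linear_combination s * hab
    exact Fintype.sum_bijective _ hbij _ _ (fun s => rfl)
  have h4 : ∑ s : ZMod q, g s ≤ 2 * q * (1 + Real.log q) := g_sum_bound q (by omega)
  -- numeric assembly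
  have hK : ((U / q + 1 : ℕ) : ℝ) ≤ ((U : ℝ) + q) / q := by
    rw [le_div_iff₀ hqR]
    have := Nat.div_mul_le_self U q
    have hcast : ((U / q * q : ℕ) : ℝ) ≤ (U : ℝ) := by exact_mod_cast this
    push_cast at hcast ⊢
    nlinarith
  have hUx : (U : ℝ) ≤ Real.sqrt x := Nat.floor_le hsx0.le
  have hlogq : 1 / 2 ≤ Real.log q := by
    calc (1:ℝ) / 2 ≤ Real.log 2 := by
          have := Real.log_two_gt_d9
          linarith
      _ ≤ Real.log q := by
          apply Real.log_le_log (by norm_num)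
          exact_mod_cast hq2'
  have hlogpos : 0 < Real.log q := by linarith
  have hSnn : 0 ≤ ∑ s : ZMod q, g s := Finset.sum_nonneg (fun s _ => hgnn s)
  calc ‖∑ u ∈ (Finset.Icc 1 U).filter (fun u => ¬ q ∣ u),
      ∑ v ∈ Finset.Ioc u ⌊x / u⌋₊,
        Complex.exp (2 * Real.pi * Complex.I * ((u * v : ℕ) * ((a : ℝ) / q + β)))‖
      ≤ (U / q + 1 : ℕ) * ∑ s : ZMod q, g s := by
        rw [← h3]; exact h1.trans h2
    _ ≤ ((U : ℝ) + q) / q * (2 * q * (1 + Real.log q)) := by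
        apply mul_le_mul hK h4 hSnn
        positivity
    _ = 2 * ((U : ℝ) + q) * (1 + Real.log q) := by
        field_simp
    _ ≤ 2 * (Real.sqrt x + q) * (3 * Real.log q) := by
        apply mul_le_mul
        · apply mul_le_mul_of_nonneg_left _ (by norm_num)
          linarith
        · linarith
        · positivity
        · positivity
    _ = 6 * (Real.sqrt x + q) * Real.log q := by ring
end

section
/- Assume the Pongsriiam–Vaughan estimate: for every ε > 0, real x ≥ 1 and positive integer d, ∑_{n ≤ x, d | n} τ(n) = (x/d) ∑_{r | d} (φ(r)/r)(log(x/r²) + 2γ − 1) + O((x^{1/3} + d^{1/2}) x^ε). Then for every positive integer q, U_q(x) := ∑_{n ≤ x} τ(n) c_q(n) = (φ(q)/q) x (log(x/q²) + 2γ − 1) + O(q τ(q)(x^{1/3} + q^{1/2}) x^ε). -/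
open Finset Real


lemma moebius_inv_aux (g : ℕ → ℝ) (q : ℕ) (hq : 0 < q) :
    ∑ d ∈ q.divisors, ((ArithmeticFunction.moebius (q / d) : ℤ) : ℝ) *
      (∑ r ∈ d.divisors, g r) = g q := by
  have h := (ArithmeticFunction.sum_eq_iff_sum_mul_moebius_eq
    (f := g) (g := fun n => ∑ r ∈ n.divisors, g r)).mp (fun n _ => rfl) q hq
  rw [← h, Nat.sum_divisorsAntidiagonal'
    (f := fun a b => ((ArithmeticFunction.moebius a : ℤ) : ℝ) * ∑ r ∈ b.divisors, g r)]


/-- The Ramanujan sum `c_q(n) = ∑_{d ∣ gcd(n,q)} d μ(q/d)`, as a real number. -/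
noncomputable def ramanujanSum (q n : ℕ) : ℝ :=
  ∑ d ∈ (Nat.gcd n q).divisors, (d : ℝ) * (ArithmeticFunction.moebius (q / d) : ℝ)

/-- Assuming the Pongsriiam–Vaughan estimate for `∑_{n ≤ x, d ∣ n} τ(n)`, one has
`U_q(x) = ∑_{n ≤ x} τ(n) c_q(n) = (φ(q)/q) x (log(x/q²) + 2γ − 1)
+ O(q τ(q)(x^{1/3} + q^{1/2}) x^ε)`. -/
theorem U_q_asymptotic (ε : ℝ) (hε : 0 < ε)
    (hPV : ∃ C > 0, ∀ (x : ℝ) (d : ℕ), 1 ≤ x → 1 ≤ d →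
      |(∑ n ∈ (Finset.Icc 1 ⌊x⌋₊).filter (fun n => d ∣ n), (n.divisors.card : ℝ)) -
          (x / d) * ∑ r ∈ d.divisors, ((Nat.totient r : ℝ) / r) *
            (Real.log (x / r ^ 2) + 2 * Real.eulerMascheroniConstant - 1)| ≤
        C * (x ^ ((1:ℝ)/3) + (d : ℝ) ^ ((1:ℝ)/2)) * x ^ ε) :
    ∃ C > 0, ∀ (x : ℝ) (q : ℕ), 1 ≤ x → 1 ≤ q →
      |(∑ n ∈ Finset.Icc 1 ⌊x⌋₊, (n.divisors.card : ℝ) * ramanujanSum q n) -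
          ((Nat.totient q : ℝ) / q) * x *
            (Real.log (x / q ^ 2) + 2 * Real.eulerMascheroniConstant - 1)| ≤
        C * q * (q.divisors.card : ℝ) * (x ^ ((1:ℝ)/3) + (q : ℝ) ^ ((1:ℝ)/2)) * x ^ ε := by
  clear hε
  obtain ⟨C, hC, hPV⟩ := hPV
  refine ⟨C, hC, ?_⟩
  intro x q hx hq
  have hq0 : 0 < q := hq
  set N := ⌊x⌋₊ with hN
  set g : ℕ → ℝ := fun r =>
    ((Nat.totient r : ℝ) / r) * (Real.log (x / r ^ 2) + 2 * Real.eulerMascheroniConstant - 1)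
    with hg
  set F : ℕ → ℝ := fun d => ∑ r ∈ d.divisors, g r with hF
  set S : ℕ → ℝ := fun d =>
    ∑ n ∈ (Finset.Icc 1 N).filter (fun n => d ∣ n), (n.divisors.card : ℝ) with hS
  -- Step A: swap sums
  have stepA : (∑ n ∈ Finset.Icc 1 N, (n.divisors.card : ℝ) * ramanujanSum q n)
      = ∑ d ∈ q.divisors, (d : ℝ) * ((ArithmeticFunction.moebius (q / d) : ℤ) : ℝ) * S d := by
    have hgcd : ∀ n ∈ Finset.Icc 1 N, (Nat.gcd n q).divisors
        = q.divisors.filter (fun d => d ∣ n) := by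
      intro n hn
      ext d
      have hgne : Nat.gcd n q ≠ 0 := Nat.gcd_ne_zero_right hq0.ne'
      simp [Nat.mem_divisors, Nat.dvd_gcd_iff, hgne, hq0.ne', and_comm]
    calc (∑ n ∈ Finset.Icc 1 N, (n.divisors.card : ℝ) * ramanujanSum q n)
        = ∑ n ∈ Finset.Icc 1 N, ∑ d ∈ q.divisors,
            if d ∣ n then (d : ℝ) * ((ArithmeticFunction.moebius (q / d) : ℤ) : ℝ)
              * (n.divisors.card : ℝ) else 0 := by
          refine Finset.sum_congr rfl fun n hn => ?_
          rw [ramanujanSum, hgcd n hn, Finset.sum_filter, Finset.mul_sum]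
          refine Finset.sum_congr rfl fun d _ => ?_
          split <;> ring_nf <;> simp
      _ = ∑ d ∈ q.divisors, ∑ n ∈ Finset.Icc 1 N,
            if d ∣ n then (d : ℝ) * ((ArithmeticFunction.moebius (q / d) : ℤ) : ℝ)
              * (n.divisors.card : ℝ) else 0 := Finset.sum_comm
      _ = ∑ d ∈ q.divisors, (d : ℝ) * ((ArithmeticFunction.moebius (q / d) : ℤ) : ℝ) * S d := by
          refine Finset.sum_congr rfl fun d _ => ?_
          rw [hS, Finset.mul_sum, ← Finset.sum_filter]
  -- Step B: main term
  have stepB : ∑ d ∈ q.divisors, (d : ℝ) * ((ArithmeticFunction.moebius (q / d) : ℤ) : ℝ)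
        * ((x / d) * F d)
      = ((Nat.totient q : ℝ) / q) * x
          * (Real.log (x / q ^ 2) + 2 * Real.eulerMascheroniConstant - 1) := by
    have : ∑ d ∈ q.divisors, (d : ℝ) * ((ArithmeticFunction.moebius (q / d) : ℤ) : ℝ)
        * ((x / d) * F d)
        = x * ∑ d ∈ q.divisors, ((ArithmeticFunction.moebius (q / d) : ℤ) : ℝ) * F d := by
      rw [Finset.mul_sum]
      refine Finset.sum_congr rfl fun d hd => ?_
      have hd0 : (d : ℝ) ≠ 0 := by
        exact_mod_cast (Nat.pos_of_mem_divisors hd).ne'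
      field_simp
    rw [this, moebius_inv_aux g q hq0, hg]
    ring
  -- combine
  have key : (∑ n ∈ Finset.Icc 1 N, (n.divisors.card : ℝ) * ramanujanSum q n) -
        ((Nat.totient q : ℝ) / q) * x
          * (Real.log (x / q ^ 2) + 2 * Real.eulerMascheroniConstant - 1)
      = ∑ d ∈ q.divisors, (d : ℝ) * ((ArithmeticFunction.moebius (q / d) : ℤ) : ℝ)
          * (S d - (x / d) * F d) := by
    rw [stepA, ← stepB, ← Finset.sum_sub_distrib]
    refine Finset.sum_congr rfl fun d _ => ?_
    ring
  rw [key]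
  -- Step C: error estimate
  have hcard : q.divisors.card • (C * q * ((x ^ ((1:ℝ)/3) + (q : ℝ) ^ ((1:ℝ)/2)) * x ^ ε))
      = C * q * (q.divisors.card : ℝ) * (x ^ ((1:ℝ)/3) + (q : ℝ) ^ ((1:ℝ)/2)) * x ^ ε := by
    rw [nsmul_eq_mul]; ring
  calc |∑ d ∈ q.divisors, (d : ℝ) * ((ArithmeticFunction.moebius (q / d) : ℤ) : ℝ)
          * (S d - (x / d) * F d)|
      ≤ ∑ d ∈ q.divisors, |(d : ℝ) * ((ArithmeticFunction.moebius (q / d) : ℤ) : ℝ)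
          * (S d - (x / d) * F d)| := Finset.abs_sum_le_sum_abs _ _
    _ ≤ ∑ d ∈ q.divisors, C * q * ((x ^ ((1:ℝ)/3) + (q : ℝ) ^ ((1:ℝ)/2)) * x ^ ε) := by
        refine Finset.sum_le_sum fun d hd => ?_
        have hd1 : 1 ≤ d := Nat.pos_of_mem_divisors hd
        have hdq : d ≤ q := Nat.le_of_dvd hq0 (Nat.dvd_of_mem_divisors hd)
        have hμ : |((ArithmeticFunction.moebius (q / d) : ℤ) : ℝ)| ≤ 1 := by
          rw [← Int.cast_abs]
          exact_mod_cast ArithmeticFunction.abs_moebius_le_one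
        have hE := hPV x d hx hd1
        rw [abs_mul, abs_mul]
        have h1 : |(d : ℝ)| * |((ArithmeticFunction.moebius (q / d) : ℤ) : ℝ)| ≤ (q : ℝ) := by
          rw [abs_of_nonneg (by positivity)]
          calc (d : ℝ) * |((ArithmeticFunction.moebius (q / d) : ℤ) : ℝ)|
              ≤ (d : ℝ) * 1 := by
                exact mul_le_mul_of_nonneg_left hμ (by positivity)
            _ ≤ (q : ℝ) := by rw [mul_one]; exact_mod_cast hdq
        have h2 : |S d - (x / d) * F d|
            ≤ C * ((x ^ ((1:ℝ)/3) + (q : ℝ) ^ ((1:ℝ)/2)) * x ^ ε) := by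
          refine hE.trans ?_
          rw [mul_assoc]
          refine mul_le_mul_of_nonneg_left ?_ hC.le
          refine mul_le_mul_of_nonneg_right ?_ (by positivity)
          refine add_le_add_right ?_ _
          exact Real.rpow_le_rpow (by positivity) (by exact_mod_cast hdq) (by norm_num)
        calc |(d : ℝ)| * |((ArithmeticFunction.moebius (q / d) : ℤ) : ℝ)|
              * |S d - (x / d) * F d|
            ≤ (q : ℝ) * (C * ((x ^ ((1:ℝ)/3) + (q : ℝ) ^ ((1:ℝ)/2)) * x ^ ε)) := by
              exact mul_le_mul h1 h2 (abs_nonneg _) (by positivity)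
          _ = C * q * ((x ^ ((1:ℝ)/3) + (q : ℝ) ^ ((1:ℝ)/2)) * x ^ ε) := by ring
    _ = C * q * (q.divisors.card : ℝ) * (x ^ ((1:ℝ)/3) + (q : ℝ) ^ ((1:ℝ)/2)) * x ^ ε := by
        rw [Finset.sum_const, hcard]
end

section
/- Let S(α) = ∑_{n ≤ x} τ(n) e(nα). Then ∫₀¹ |S(α)| dα ≥ ∑_{q ≤ √x/2} ∫_{−1/(4x)}^{1/(4x)} |∑_{n ≤ x} τ(n) c_q(n) e(nβ)| dβ. -/
open Finset intervalIntegral MeasureTheory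

noncomputable def Ffun (N : ℕ) : ℝ → ℝ := fun α =>
  ‖∑ n ∈ Finset.Icc 1 N, (n.divisors.card : ℂ) *
      Complex.exp (2 * Real.pi * Complex.I * (n * α))‖


lemma Ffun_cont (N : ℕ) : Continuous (Ffun N) := by
  unfold Ffun
  fun_prop

lemma Ffun_per (N : ℕ) : Function.Periodic (Ffun N) 1 := by
  intro α
  unfold Ffun
  congr 1
  refine Finset.sum_congr rfl fun n hn => ?_
  congr 1
  push_cast
  rw [show ((2:ℂ) * Real.pi * Complex.I * (n * ((α:ℂ) + 1)))
        = 2 * Real.pi * Complex.I * (n * α) + n * (2 * Real.pi * Complex.I) by ring,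
    Complex.exp_add, Complex.exp_nat_mul_two_pi_mul_I, mul_one]

lemma frac_spacing {q q' a a' : ℕ} (ha : 1 ≤ a) (haq : a ≤ q) (ha' : 1 ≤ a') (haq' : a' ≤ q')
    (hg : Nat.gcd a q = 1) (hg' : Nat.gcd a' q' = 1) (hne : ¬ (q = q' ∧ a = a')) :
    1 / ((q : ℝ) * q') ≤ |(a : ℝ) / q - (a' : ℝ) / q'| := by
  have hq : 0 < q := lt_of_lt_of_le ha haq
  have hq' : 0 < q' := lt_of_lt_of_le ha' haq'
  have hcross : a * q' ≠ a' * q := by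
    intro h
    have hdvd : q ∣ q' := by
      refine Nat.Coprime.dvd_of_dvd_mul_left (Nat.coprime_comm.mp hg) ⟨a', ?_⟩
      rw [h, mul_comm]
    have hdvd' : q' ∣ q := by
      refine Nat.Coprime.dvd_of_dvd_mul_left (Nat.coprime_comm.mp hg') ⟨a, ?_⟩
      rw [← h, mul_comm]
    have hqq : q = q' := Nat.dvd_antisymm hdvd hdvd'
    have : a = a' := by
      subst hqq
      exact Nat.eq_of_mul_eq_mul_right hq h
    exact hne ⟨hqq, this⟩
  have h1 : (1 : ℝ) ≤ |(a : ℝ) * q' - (q : ℝ) * a'| := by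
    have h0 : ((a : ℤ) * q' - q * a') ≠ 0 := by
      intro h
      apply hcross
      have := sub_eq_zero.mp h
      exact_mod_cast this.trans (mul_comm (q:ℤ) (a':ℤ))
    have h2 := Int.one_le_abs h0
    calc (1:ℝ) ≤ (|(a : ℤ) * q' - q * a'| : ℤ) := by exact_mod_cast h2
      _ = |(a : ℝ) * q' - (q : ℝ) * a'| := by push_cast [Int.cast_abs]; norm_num
  have hqr : (0:ℝ) < (q:ℝ) * q' := by positivity
  rw [div_sub_div _ _ (by positivity : (q:ℝ) ≠ 0) (by positivity : (q':ℝ) ≠ 0), abs_div,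
    abs_of_pos hqr]
  gcongr

lemma disj_helper {c c' δ : ℝ} (h : 2 * δ ≤ |c - c'|) :
    Disjoint (Set.Ioc (c - δ) (c + δ)) (Set.Ioc (c' - δ) (c' + δ)) := by
  rw [Set.Ioc_disjoint_Ioc]
  rcases le_total c c' with h' | h'
  · rw [abs_of_nonpos (by linarith)] at h
    calc min (c + δ) (c' + δ) ≤ c + δ := min_le_left _ _
      _ ≤ c' - δ := by linarith
      _ ≤ max (c - δ) (c' - δ) := le_max_right _ _
  · rw [abs_of_nonneg (by linarith)] at h
    calc min (c + δ) (c' + δ) ≤ c' + δ := min_le_right _ _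
      _ ≤ c - δ := by linarith
      _ ≤ max (c - δ) (c' - δ) := le_max_left _ _

/-- Lower bound step: `∫₀¹ |S(α)| dα ≥ ∑_{q ≤ √x/2} ∫_{−1/(4x)}^{1/(4x)}
|∑_{n ≤ x} τ(n) c_q(n) e(nβ)| dβ`, where `c_q` is the Ramanujan sum. -/
theorem L1_lower_bound_step (x : ℝ) (hx : 1 ≤ x) :
    ∑ q ∈ Finset.Icc 1 ⌊Real.sqrt x / 2⌋₊,
        ∫ β in (-(1 / (4 * x)))..(1 / (4 * x)),
          ‖∑ n ∈ Finset.Icc 1 ⌊x⌋₊, (n.divisors.card : ℂ) *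
              (∑ a ∈ (Finset.Icc 1 q).filter (fun a => Nat.gcd a q = 1),
                Complex.exp (2 * Real.pi * Complex.I * ((a : ℝ) * n / q))) *
              Complex.exp (2 * Real.pi * Complex.I * (n * β))‖ ≤
      ∫ α in (0:ℝ)..1,
        ‖∑ n ∈ Finset.Icc 1 ⌊x⌋₊, (n.divisors.card : ℂ) *
            Complex.exp (2 * Real.pi * Complex.I * (n * α))‖ := by
  have hx0 : (0:ℝ) < x := lt_of_lt_of_le one_pos hx
  set N := ⌊x⌋₊ with hN
  set Q := ⌊Real.sqrt x / 2⌋₊ with hQ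
  set δ : ℝ := 1 / (4 * x) with hδ
  have hδ0 : 0 < δ := by positivity
  have hQle : (Q : ℝ) ≤ Real.sqrt x / 2 := Nat.floor_le (by positivity)
  -- bounds on q
  have hqbound : ∀ q ∈ Finset.Icc 1 Q, (1:ℝ) ≤ (q:ℝ) ∧ (q:ℝ) ≤ Real.sqrt x / 2 := by
    intro q hq
    rw [Finset.mem_Icc] at hq
    constructor
    · exact_mod_cast hq.1
    · exact le_trans (by exact_mod_cast hq.2) hQle
  have hsqrt_le : Real.sqrt x ≤ x := (Real.sqrt_le_left hx0.le).mpr (by nlinarith)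
  -- Step 1
  have hstep1 : ∀ q ∈ Finset.Icc 1 Q,
      (∫ β in (-δ)..δ,
        ‖∑ n ∈ Finset.Icc 1 N, (n.divisors.card : ℂ) *
            (∑ a ∈ (Finset.Icc 1 q).filter (fun a => Nat.gcd a q = 1),
              Complex.exp (2 * Real.pi * Complex.I * ((a : ℝ) * n / q))) *
            Complex.exp (2 * Real.pi * Complex.I * (n * β))‖)
      ≤ ∑ a ∈ (Finset.Icc 1 q).filter (fun a => Nat.gcd a q = 1),
          ∫ t in Set.Ioc ((a:ℝ)/q - δ) ((a:ℝ)/q + δ), Ffun N t := by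
    intro q hq
    obtain ⟨hq1, hqx⟩ := hqbound q hq
    have hq0 : (0:ℝ) < (q:ℝ) := by linarith
    set A := (Finset.Icc 1 q).filter (fun a => Nat.gcd a q = 1) with hA
    have key : ∀ β : ℝ, ∑ n ∈ Finset.Icc 1 N, (n.divisors.card : ℂ) *
          (∑ a ∈ A, Complex.exp (2 * Real.pi * Complex.I * ((a : ℝ) * n / q))) *
          Complex.exp (2 * Real.pi * Complex.I * (n * β))
        = ∑ a ∈ A, ∑ n ∈ Finset.Icc 1 N, (n.divisors.card : ℂ) *
            Complex.exp (2 * Real.pi * Complex.I * ((n : ℂ) * (((a:ℝ)/q + β : ℝ) : ℂ))) := by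
      intro β
      simp_rw [Finset.mul_sum, Finset.sum_mul]
      rw [Finset.sum_comm]
      refine Finset.sum_congr rfl fun a _ => Finset.sum_congr rfl fun n _ => ?_
      rw [mul_assoc, ← Complex.exp_add]
      congr 1
      push_cast
      field_simp
    have hcont1 : Continuous fun β : ℝ =>
        ‖∑ n ∈ Finset.Icc 1 N, (n.divisors.card : ℂ) *
            (∑ a ∈ A, Complex.exp (2 * Real.pi * Complex.I * ((a : ℝ) * n / q))) *
            Complex.exp (2 * Real.pi * Complex.I * (n * β))‖ := by fun_prop
    have hcont2 : Continuous fun β : ℝ => ∑ a ∈ A, Ffun N ((a:ℝ)/q + β) := by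
      refine continuous_finset_sum _ fun a _ => (Ffun_cont N).comp ?_
      exact continuous_const.add continuous_id
    calc ∫ β in (-δ)..δ,
          ‖∑ n ∈ Finset.Icc 1 N, (n.divisors.card : ℂ) *
              (∑ a ∈ A, Complex.exp (2 * Real.pi * Complex.I * ((a : ℝ) * n / q))) *
              Complex.exp (2 * Real.pi * Complex.I * (n * β))‖
        ≤ ∫ β in (-δ)..δ, ∑ a ∈ A, Ffun N ((a:ℝ)/q + β) := by
          refine intervalIntegral.integral_mono_on (by linarith)
            (hcont1.intervalIntegrable _ _) (hcont2.intervalIntegrable _ _) fun β _ => ?_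
          rw [key β]
          exact norm_sum_le _ _
      _ = ∑ a ∈ A, ∫ β in (-δ)..δ, Ffun N ((a:ℝ)/q + β) := by
          refine intervalIntegral.integral_finset_sum fun a _ => ?_
          exact ((Ffun_cont N).comp (continuous_const.add continuous_id)).intervalIntegrable _ _
      _ = ∑ a ∈ A, ∫ t in Set.Ioc ((a:ℝ)/q - δ) ((a:ℝ)/q + δ), Ffun N t := by
          refine Finset.sum_congr rfl fun a _ => ?_
          rw [intervalIntegral.integral_comp_add_left (Ffun N) ((a:ℝ)/q)]
          rw [show (a:ℝ)/q + -δ = (a:ℝ)/q - δ by ring]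
          rw [intervalIntegral.integral_of_le (by linarith)]
  refine le_trans (Finset.sum_le_sum hstep1) ?_
  rw [Finset.sum_sigma']
  set s := (Finset.Icc 1 Q).sigma
      (fun q => (Finset.Icc 1 q).filter (fun a => Nat.gcd a q = 1)) with hs
  have hmem : ∀ p ∈ s, 1 ≤ p.2 ∧ p.2 ≤ p.1 ∧ Nat.gcd p.2 p.1 = 1 ∧ p.1 ∈ Finset.Icc 1 Q := by
    intro p hp
    simp only [hs, Finset.mem_sigma, Finset.mem_filter, Finset.mem_Icc] at hp
    exact ⟨hp.2.1.1, hp.2.1.2, hp.2.2, Finset.mem_Icc.mpr hp.1⟩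
  have hsub : ∀ p ∈ s, Set.Ioc ((p.2:ℝ)/p.1 - δ) ((p.2:ℝ)/p.1 + δ) ⊆ Set.Ioc δ (1 + δ) := by
    intro p hp
    obtain ⟨h1, h2, hg, hqQ⟩ := hmem p hp
    obtain ⟨hq1, hqx⟩ := hqbound p.1 hqQ
    have hq0 : (0:ℝ) < (p.1:ℝ) := by linarith
    have ha1 : (1:ℝ) ≤ (p.2:ℝ) := by exact_mod_cast h1
    have haq : (p.2:ℝ) ≤ (p.1:ℝ) := by exact_mod_cast h2
    have hcle : (p.2:ℝ)/p.1 ≤ 1 := by rw [div_le_one hq0]; exact haq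
    have hq2x : (p.1:ℝ) ≤ 2 * x := by nlinarith [Real.sqrt_nonneg x]
    have hcge : 2 * δ ≤ (p.2:ℝ)/p.1 := by
      have h3 : 1 / (2 * x) ≤ 1 / (p.1:ℝ) := by
        apply one_div_le_one_div_of_le hq0 hq2x
      have h4 : 1 / (p.1:ℝ) ≤ (p.2:ℝ)/p.1 := by gcongr
      calc 2 * δ = 1 / (2 * x) := by rw [hδ]; ring
        _ ≤ _ := le_trans h3 h4
    exact Set.Ioc_subset_Ioc (by linarith) (by linarith)
  have hdisj : Set.Pairwise (↑s)
      ((Function.onFun Disjoint fun p : Σ _ : ℕ, ℕ =>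
        Set.Ioc ((p.2:ℝ)/p.1 - δ) ((p.2:ℝ)/p.1 + δ))) := by
    intro p hp p' hp' hne
    obtain ⟨h1, h2, hg, hqQ⟩ := hmem p hp
    obtain ⟨h1', h2', hg', hqQ'⟩ := hmem p' hp'
    obtain ⟨hq1, hqx⟩ := hqbound p.1 hqQ
    obtain ⟨hq1', hqx'⟩ := hqbound p'.1 hqQ'
    have hneq : ¬ (p.1 = p'.1 ∧ p.2 = p'.2) := by
      rintro ⟨e1, e2⟩
      exact hne (Sigma.ext e1 (heq_of_eq e2))
    have hspace := frac_spacing h1 h2 h1' h2' hg hg' hneq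
    have hqq : (p.1:ℝ) * p'.1 ≤ 2 * x := by
      have hs2 : Real.sqrt x * Real.sqrt x = x := Real.mul_self_sqrt hx0.le
      nlinarith [Real.sqrt_nonneg x]
    have h2δ : 2 * δ ≤ 1 / ((p.1:ℝ) * p'.1) := by
      have : (0:ℝ) < (p.1:ℝ) * p'.1 := by positivity
      rw [hδ, show 2 * (1 / (4 * x)) = 1 / (2 * x) by ring]
      exact one_div_le_one_div_of_le this hqq
    exact disj_helper (le_trans h2δ hspace)
  have hint : IntegrableOn (Ffun N) (Set.Ioc δ (1 + δ)) := (Ffun_cont N).integrableOn_Ioc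
  calc ∑ p ∈ s, ∫ t in Set.Ioc ((p.2:ℝ)/p.1 - δ) ((p.2:ℝ)/p.1 + δ), Ffun N t
      = ∫ t in ⋃ p ∈ s, Set.Ioc ((p.2:ℝ)/p.1 - δ) ((p.2:ℝ)/p.1 + δ), Ffun N t := by
        refine (integral_biUnion_finset s (fun p _ => measurableSet_Ioc) hdisj
          (fun p hp => hint.mono_set (hsub p hp))).symm
    _ ≤ ∫ t in Set.Ioc δ (1 + δ), Ffun N t := by
        refine setIntegral_mono_set hint
          (Filter.Eventually.of_forall fun t => norm_nonneg _)
          (HasSubset.Subset.eventuallyLE (Set.iUnion₂_subset hsub))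
    _ = ∫ t in δ..(δ + 1), Ffun N t := by
        rw [intervalIntegral.integral_of_le (by linarith)]
        norm_num [add_comm]
    _ = ∫ t in (0:ℝ)..(0 + 1), Ffun N t := (Ffun_per N).intervalIntegral_add_eq δ 0
    _ = ∫ α in (0:ℝ)..1, ‖∑ n ∈ Finset.Icc 1 N, (n.divisors.card : ℂ) *
            Complex.exp (2 * Real.pi * Complex.I * (n * α))‖ := by
        norm_num [Ffun]
end
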